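/- If every one-dimensional interval contained in [0, 2^w − 1] can be partitioned into at most m dyadic intervals, then every d-dimensional box contained in [0, 2^w − 1]^d can be partitioned into at most m^d dyadic boxes. -/
import Mathlib


/-- Dyadic interval `D y i = {n : 2^i·y ≤ n ≤ 2^i·(y+1)−1}`. -/
def D (y i : ℕ) : Set ℕ := {n | 2 ^ i * y ≤ n ∧ n ≤ 2 ^ i * (y + 1) - 1}

/-- Dyadic box: the product of dyadic intervals `D (y j) (i j)`. -/
def DB {d : ℕ} (y i : Fin d → ℕ) : Set (Fin d → ℕ) :=
  {p | ∀ j, p j ∈ D (y j) (i j)}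

theorem stmt_6 {d : ℕ} (w m : ℕ)
    (h1 : ∀ a b : ℕ, a ≤ b → b ≤ 2 ^ w - 1 →
      ∃ S : Finset (ℕ × ℕ), S.card ≤ m ∧
        (S : Set (ℕ × ℕ)).Pairwise (fun p q => Disjoint (D p.1 p.2) (D q.1 q.2)) ∧
        ⋃ p ∈ S, D p.1 p.2 = Set.Icc a b) :
    ∀ a b : Fin d → ℕ, (∀ j, a j ≤ b j) → (∀ j, b j ≤ 2 ^ w - 1) →
      ∃ S : Finset ((Fin d → ℕ) × (Fin d → ℕ)), S.card ≤ m ^ d ∧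
        (S : Set ((Fin d → ℕ) × (Fin d → ℕ))).Pairwise
          (fun p q => Disjoint (DB p.1 p.2) (DB q.1 q.2)) ∧
        ⋃ p ∈ S, DB p.1 p.2 = {q : Fin d → ℕ | ∀ j, a j ≤ q j ∧ q j ≤ b j} := by
  classical
  intro a b hab hb
  choose S hcard hdisj hunion using fun j => h1 (a j) (b j) (hab j) (hb j)
  set T : Finset (Fin d → ℕ × ℕ) := Fintype.piFinset S with hT
  refine ⟨T.image (fun f => ((fun j => (f j).1), (fun j => (f j).2))), ?_, ?_, ?_⟩
  · calc (T.image _).card ≤ T.card := Finset.card_image_le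
    _ = ∏ j, (S j).card := Fintype.card_piFinset S
    _ ≤ m ^ (Finset.univ : Finset (Fin d)).card :=
        Finset.prod_le_pow_card _ _ _ (fun j _ => hcard j)
    _ = m ^ d := by rw [Finset.card_fin]
  · intro p hp q hq hpq
    simp only [Finset.coe_image, Set.mem_image, Finset.mem_coe] at hp hq
    obtain ⟨f, hf, rfl⟩ := hp
    obtain ⟨g, hg, rfl⟩ := hq
    have hfg : f ≠ g := by
      rintro rfl; exact hpq rfl
    obtain ⟨j, hj⟩ : ∃ j, f j ≠ g j := by
      by_contra h
      push_neg at h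
      exact hfg (funext h)
    have hfj : f j ∈ S j := Fintype.mem_piFinset.mp hf j
    have hgj : g j ∈ S j := Fintype.mem_piFinset.mp hg j
    have hD : Disjoint (D (f j).1 (f j).2) (D (g j).1 (g j).2) :=
      hdisj j hfj hgj hj
    rw [Set.disjoint_left]
    intro x hx hx'
    exact Set.disjoint_left.mp hD (hx j) (hx' j)
  · ext q
    simp only [Set.mem_iUnion, Finset.mem_image, Set.mem_setOf_eq, exists_prop,
      Finset.mem_coe]
    constructor
    · rintro ⟨p, ⟨f, hf, rfl⟩, hq⟩ j
      have hfj : f j ∈ S j := Fintype.mem_piFinset.mp hf j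
      have : q j ∈ ⋃ p ∈ S j, D p.1 p.2 := by
        exact Set.mem_iUnion₂.mpr ⟨f j, hfj, hq j⟩
      rw [hunion j] at this
      exact this
    · intro hq
      have : ∀ j, ∃ p ∈ S j, q j ∈ D p.1 p.2 := by
        intro j
        have : q j ∈ ⋃ p ∈ S j, D p.1 p.2 := by
          rw [hunion j]; exact ⟨(hq j).1, (hq j).2⟩
        simpa using Set.mem_iUnion₂.mp this
      choose f hf hqf using this
      exact ⟨_, ⟨f, Fintype.mem_piFinset.mpr hf, rfl⟩, hqf⟩
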